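/- Let G be a finite connected multigraph without self-loops on vertex set V, with graph lattice Λ(G) = ℤ^V/ℤ[V]. Suppose G is 2-connected, G contains no cut-edges, and v ∈ V is a vertex whose class v̄ in Λ(G) can be written v̄ = x + y with x, y ∈ Λ(G) and x·y = −1. Then the sub-multigraph of G induced on V∖{v} has a cut-edge e, and if R and S denote the vertex sets of the two connected components obtained by deleting e from that sub-multigraph, then {x, y} equals {class of ([R] + [v]), class of ([S] + [v])}. Furthermore, there exist unique vertices u_1, u_2 ∈ V∖{v} such that x·ū_1 = 1 and y·ū_2 = 1, and every vertex w ∉ {v, u_1, u_2} satisfies w̄·x ≤ 0 and w̄·y ≤ 0. -/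

import Mathlib

/-- The bilinear form of the multigraph with edge multiplicities `ε`:
`x·y = Σ_v d(v) x_v y_v − Σ_{v≠w} ε(v,w) x_v y_w`, where `d(v) = Σ_w ε(v,w)`. -/
def gform {V : Type*} [Fintype V] [DecidableEq V] (ε : V → V → ℕ) (x y : V → ℤ) : ℤ :=
  (∑ v, (∑ w, (ε v w : ℤ)) * (x v * y v)) -
    ∑ v, ∑ w ∈ Finset.univ.filter (· ≠ v), (ε v w : ℤ) * (x v * y w)

/-- The simple graph underlying the multigraph with edge multiplicities `ε`. -/
def gGraph {V : Type*} (ε : V → V → ℕ) : SimpleGraph V :=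
  SimpleGraph.fromRel (fun v w => 0 < ε v w)

/-- Connectivity of the sub-multigraph induced on the set `S`. -/
def gConnOn {V : Type*} (ε : V → V → ℕ) (S : Set V) : Prop :=
  (SimpleGraph.fromRel (fun v w : S => 0 < ε v.1 w.1)).Connected

/-- `ℤ[V]`, the span of the all-ones vector `[V]` in `ℤ^V`. -/
def onesSub (V : Type*) : Submodule ℤ (V → ℤ) :=
  Submodule.span ℤ ({fun _ => (1 : ℤ)} : Set (V → ℤ))

/-- The characteristic vector `[R] ∈ ℤ^V` of a finite set of vertices. -/
def chiF {V : Type*} [DecidableEq V] (R : Finset V) : V → ℤ :=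
  fun v => if v ∈ R then 1 else 0

/-- Irreducibility, in the graph lattice `Λ(G) = ℤ^V/ℤ[V]`, of the class of
`z : ℤ^V`, stated on representatives: the class of `z` cannot be written as
`x + y` with `x, y` nonzero classes and `x·y ≥ 0`. -/
def gIrredRep {V : Type*} [Fintype V] [DecidableEq V] (ε : V → V → ℕ) (z : V → ℤ) : Prop :=
  ¬ ∃ x y : V → ℤ, x ∉ onesSub V ∧ y ∉ onesSub V ∧
      z - (x + y) ∈ onesSub V ∧ 0 ≤ gform ε x y

/-- The characteristic vector of a set of vertices. -/
noncomputable def chiS {V : Type*} (S : Set V) : V → ℤ := S.indicator 1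

/-- The multiplicity function obtained from `ε` by deleting one edge between
`a` and `b`, when `ε a b = 1` (so that all edges between `a` and `b` vanish). -/
def εdel {V : Type*} [DecidableEq V] (ε : V → V → ℕ) (a b : V) : V → V → ℕ :=
  fun x y => if (x = a ∧ y = b) ∨ (x = b ∧ y = a) then 0 else ε x y

/-- The vertex set of the connected component of `a` in the sub-multigraph
(with multiplicities `ε`) induced on `S`. -/
def reachSet {V : Type*} (ε : V → V → ℕ) (S : Set V) (a : V) : Set V :=
  {z : V | ∃ (ha : a ∈ S) (hz : z ∈ S),
    (SimpleGraph.fromRel (fun p q : S => 0 < ε p.1 q.1)).Reachable ⟨a, ha⟩ ⟨z, hz⟩}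

set_option linter.unusedSectionVars false

section Aux
variable {V : Type*} [Fintype V] [DecidableEq V]

lemma onesSub_mem_iff (z : V → ℤ) : z ∈ onesSub V ↔ ∃ c : ℤ, ∀ w, z w = c := by
  constructor
  · intro h
    rw [onesSub, Submodule.mem_span_singleton] at h
    obtain ⟨c, hc⟩ := h
    refine ⟨c, fun w => ?_⟩
    rw [← hc]; simp
  · rintro ⟨c, hc⟩
    rw [onesSub, Submodule.mem_span_singleton]
    exact ⟨c, by funext w; simp [hc w]⟩

lemma gform_eq (ε : V → V → ℕ) (hloop : ∀ v, ε v v = 0) (x y : V → ℤ) :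
    gform ε x y = ∑ v, ∑ w, (ε v w : ℤ) * (x v * (y v - y w)) := by
  unfold gform
  have h1 : ∀ v : V, ∑ w ∈ Finset.univ.filter (· ≠ v), (ε v w : ℤ) * (x v * y w)
      = ∑ w, (ε v w : ℤ) * (x v * y w) := by
    intro v
    apply Finset.sum_subset (Finset.filter_subset _ _)
    intro w _ hw
    have hwv : w = v := by simpa using hw
    simp [hwv, hloop v]
  simp_rw [h1, Finset.sum_mul, ← Finset.sum_sub_distrib]
  refine Finset.sum_congr rfl fun v _ => Finset.sum_congr rfl fun w _ => ?_
  ring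

lemma epair_symm (ε : V → V → ℕ) (hsymm : ∀ v w, ε v w = ε w v) (f : V → V → ℤ) :
    ∑ v, ∑ w, (ε v w : ℤ) * f v w = ∑ v, ∑ w, (ε v w : ℤ) * f w v := by
  rw [Finset.sum_comm]
  refine Finset.sum_congr rfl fun v _ => Finset.sum_congr rfl fun w _ => ?_
  rw [hsymm]

lemma two_gform (ε : V → V → ℕ) (hsymm : ∀ v w, ε v w = ε w v) (hloop : ∀ v, ε v v = 0)
    (x y : V → ℤ) :
    2 * gform ε x y = ∑ v, ∑ w, (ε v w : ℤ) * ((x v - x w) * (y v - y w)) := by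
  have key : ∀ v w : V, (ε v w : ℤ) * ((x v - x w) * (y v - y w))
      = (ε v w : ℤ) * (x v * (y v - y w)) + (ε v w : ℤ) * (x w * (y w - y v)) := by
    intro v w; ring
  simp_rw [key, Finset.sum_add_distrib]
  rw [← epair_symm ε hsymm (fun v w => x v * (y v - y w)), ← gform_eq ε hloop]
  ring

lemma gform_comm (ε : V → V → ℕ) (hsymm : ∀ v w, ε v w = ε w v) (hloop : ∀ v, ε v v = 0)
    (x y : V → ℤ) : gform ε x y = gform ε y x := by
  have h1 := two_gform ε hsymm hloop x y
  have h2 := two_gform ε hsymm hloop y x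
  have h3 : ∑ v, ∑ w, (ε v w : ℤ) * ((x v - x w) * (y v - y w))
      = ∑ v, ∑ w, (ε v w : ℤ) * ((y v - y w) * (x v - x w)) := by
    refine Finset.sum_congr rfl fun v _ => Finset.sum_congr rfl fun w _ => ?_
    ring
  omega

lemma gform_right_inv (ε : V → V → ℕ) (hloop : ∀ v, ε v v = 0) (x y y' : V → ℤ)
    (h : y - y' ∈ onesSub V) : gform ε x y = gform ε x y' := by
  obtain ⟨c, hc⟩ := (onesSub_mem_iff _).1 h
  rw [gform_eq ε hloop, gform_eq ε hloop]
  refine Finset.sum_congr rfl fun v _ => Finset.sum_congr rfl fun w _ => ?_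
  have h1 := hc v
  have h2 := hc w
  simp only [Pi.sub_apply] at h1 h2
  have : y v - y w = y' v - y' w := by omega
  rw [this]

lemma gform_chi (ε : V → V → ℕ) (hsymm : ∀ v w, ε v w = ε w v) (hloop : ∀ v, ε v v = 0)
    (x : V → ℤ) (u : V) :
    gform ε x (chiF {u}) = ∑ q, (ε u q : ℤ) * (x u - x q) := by
  rw [gform_eq ε hloop]
  have hchi : ∀ p : V, chiF {u} p = if p = u then 1 else 0 := by
    intro p; simp [chiF]
  simp_rw [hchi]
  have key : ∀ v w : V, (ε v w : ℤ) * (x v * ((if v = u then (1:ℤ) else 0) - (if w = u then 1 else 0)))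
      = (if v = u then (ε v w : ℤ) * x v else 0) - (if w = u then (ε v w : ℤ) * x v else 0) := by
    intro v w
    by_cases h1 : v = u <;> by_cases h2 : w = u <;> simp [h1, h2] <;> ring
  simp_rw [key, Finset.sum_sub_distrib]
  have hA : (∑ v, ∑ w, if v = u then (ε v w : ℤ) * x v else 0) = ∑ w, (ε u w : ℤ) * x u := by
    rw [Finset.sum_eq_single u]
    · simp
    · intro b _ hb; simp [hb]
    · intro h; exact absurd (Finset.mem_univ u) h
  have hB : (∑ v, ∑ w, if w = u then (ε v w : ℤ) * x v else 0) = ∑ v, (ε v u : ℤ) * x v := by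
    refine Finset.sum_congr rfl fun v _ => ?_
    rw [Finset.sum_ite_eq' Finset.univ u (fun w => (ε v w : ℤ) * x v)]
    simp
  rw [hA, hB, ← Finset.sum_sub_distrib]
  refine Finset.sum_congr rfl fun q _ => ?_
  rw [hsymm q u]
  ring

lemma walk_closed {α : Type*} {G : SimpleGraph α} {P : α → Prop}
    (h : ∀ p q, P p → G.Adj p q → P q) : ∀ {p q : α}, G.Walk p q → P p → P q := by
  intro p q w
  induction w with
  | nil => exact id
  | cons h' _ ih => exact fun hp => ih (h _ _ hp h')

lemma reach_closed {α : Type*} {G : SimpleGraph α} {P : α → Prop}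
    (h : ∀ p q, P p → G.Adj p q → P q) {p q : α} (hr : G.Reachable p q) (hp : P p) : P q :=
  hr.elim fun w => walk_closed h w hp

end Aux

section Extract
variable {V : Type*} [Fintype V] [DecidableEq V]

lemma chi_v (v p : V) : chiF {v} p = if p = v then 1 else 0 := by simp [chiF]

lemma extract (ε : V → V → ℕ) (hsymm : ∀ v w, ε v w = ε w v) (hloop : ∀ v, ε v v = 0)
    (v : V) (x y : V → ℤ)
    (hsum : chiF {v} - (x + y) ∈ onesSub V)
    (hprod : gform ε x y = -1) :
    ∃ a b : V, a ≠ v ∧ b ≠ v ∧ a ≠ b ∧ ε a b = 1 ∧ x a = x b + 1 ∧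
      (∀ p q, p ≠ v → q ≠ v → 0 < ε p q → ¬(p = a ∧ q = b) → ¬(p = b ∧ q = a) → x p = x q) ∧
      (∀ p, p ≠ v → 0 < ε p v → x p = x v ∨ x p = x v - 1) := by
  classical
  set χ : V → ℤ := chiF {v} with hχ
  set t : V → V → ℤ := fun u w =>
    (ε u w : ℤ) * ((x u - x w) * ((χ u - χ w) - (x u - x w))) with ht
  -- the total sum is -2
  have h0 : gform ε x (fun w => χ w - x w) = -1 := by
    rw [gform_right_inv ε hloop x _ y ?_, hprod]
    have : (fun w => χ w - x w) - y = chiF {v} - (x + y) := by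
      funext w; simp [hχ]; ring
    rw [this]; exact hsum
  have hsum2 : ∑ u, ∑ w, t u w = -2 := by
    have h2 := two_gform ε hsymm hloop x (fun w => χ w - x w)
    rw [h0] at h2
    have : ∑ u, ∑ w, t u w
        = ∑ u, ∑ w, (ε u w : ℤ) * ((x u - x w) * ((fun w => χ w - x w) u - (fun w => χ w - x w) w)) := by
      refine Finset.sum_congr rfl fun u _ => Finset.sum_congr rfl fun w _ => ?_
      simp only [ht]; ring
    rw [this, ← h2]; ring
  have hchi01 : ∀ p, χ p = 0 ∨ χ p = 1 := by
    intro p; rw [hχ, chi_v]; by_cases h : p = v <;> simp [h]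
  have hCval : ∀ u w : V, χ u - χ w = -1 ∨ χ u - χ w = 0 ∨ χ u - χ w = 1 := by
    intro u w; rcases hchi01 u with h | h <;> rcases hchi01 w with h' | h' <;> omega
  -- each term is nonpositive
  have hm : ∀ u w : V, (x u - x w) * ((χ u - χ w) - (x u - x w)) ≤ 0 := by
    intro u w
    rcases hCval u w with h | h | h <;> rw [h] <;>
      rcases le_or_gt 0 (x u - x w) with hD | hD <;> nlinarith [sq_nonneg (x u - x w)]
  have hnp : ∀ u w : V, t u w ≤ 0 := by
    intro u w
    have hε : (0 : ℤ) ≤ (ε u w : ℤ) := Int.natCast_nonneg _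
    have := hm u w
    simp only [ht]
    exact mul_nonpos_of_nonneg_of_nonpos hε this
  have tsymm : ∀ u w, t w u = t u w := by
    intro u w; simp only [ht]; rw [hsymm w u]; ring
  -- existence of a negative term
  have hex : ∃ u w, t u w < 0 := by
    by_contra h
    push_neg at h
    have : (0 : ℤ) ≤ ∑ u, ∑ w, t u w :=
      Finset.sum_nonneg fun u _ => Finset.sum_nonneg fun w _ => h u w
    omega
  obtain ⟨a, b, hneg⟩ := hex
  have hab : a ≠ b := by
    intro h; subst h
    have : t a a = 0 := by simp [ht]
    omega
  -- bounding sums over subsets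
  have hsum2' : ∑ p ∈ Finset.univ ×ˢ Finset.univ, t p.1 p.2 = -2 := by
    rw [Finset.sum_product]; exact hsum2
  have hbound : ∀ s : Finset (V × V), (-2 : ℤ) ≤ ∑ p ∈ s, t p.1 p.2 := by
    intro s
    have hs : s ∩ (Finset.univ ×ˢ Finset.univ) = s := by
      apply Finset.inter_eq_left.2; intro p _; simp
    have hsub : s ⊆ Finset.univ ×ˢ Finset.univ := by intro p _; simp
    have h1 : ∑ p ∈ (Finset.univ ×ˢ Finset.univ) \ s, t p.1 p.2
        + ∑ p ∈ s, t p.1 p.2 = -2 := by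
      rw [Finset.sum_sdiff hsub, hsum2']
    have h2 : ∑ p ∈ (Finset.univ ×ˢ Finset.univ) \ s, t p.1 p.2 ≤ 0 :=
      Finset.sum_nonpos fun p _ => hnp p.1 p.2
    omega
  have hpairne : ((a, b) : V × V) ≠ (b, a) :=
    fun h => hab (congrArg Prod.fst h)
  have htab : t a b = -1 := by
    have h1 := hbound {(a, b), (b, a)}
    rw [Finset.sum_pair hpairne] at h1
    have h1' : (-2 : ℤ) ≤ t a b + t b a := h1
    have h2 := tsymm a b
    omega
  have hzero : ∀ u w, ¬(u = a ∧ w = b) → ¬(u = b ∧ w = a) → t u w = 0 := by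
    intro u w h1 h2
    have hmem : (u, w) ∉ ({(a, b), (b, a)} : Finset (V × V)) := by
      simp only [Finset.mem_insert, Finset.mem_singleton, Prod.mk.injEq]
      tauto
    have h3 := hbound (insert (u, w) {(a, b), (b, a)})
    rw [Finset.sum_insert hmem, Finset.sum_pair hpairne] at h3
    have h3' : (-2 : ℤ) ≤ t u w + (t a b + t b a) := h3
    have h4 := tsymm a b
    have h5 := hnp u w
    omega
  -- decode t a b = -1
  have hεnn : (0 : ℤ) ≤ (ε a b : ℤ) := Int.natCast_nonneg _
  have hmul : (ε a b : ℤ) * ((x a - x b) * ((χ a - χ b) - (x a - x b))) = -1 := htab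
  have hε1 : (ε a b : ℤ) = 1 := by
    apply Int.eq_one_of_mul_eq_one_right hεnn
      (b := -((x a - x b) * ((χ a - χ b) - (x a - x b))))
    linear_combination -hmul
  have hm1 : (x a - x b) * ((χ a - χ b) - (x a - x b)) = -1 := by
    rw [hε1, one_mul] at hmul; exact hmul
  have hεab : ε a b = 1 := by exact_mod_cast hε1
  have hC0 : χ a - χ b = 0 ∧ (x a - x b = 1 ∨ x a - x b = -1) := by
    rcases hCval a b with h | h | h
    · exfalso
      rw [h] at hm1
      have h2 : (x a - x b) * ((x a - x b) + 1) = 1 := by linear_combination -hm1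
      rcases Int.eq_one_or_neg_one_of_mul_eq_one h2 with h3 | h3 <;> rw [h3] at h2 <;> omega
    · constructor
      · exact h
      · rw [h] at hm1
        have h2 : (x a - x b) * (x a - x b) = 1 := by linear_combination -hm1
        rcases mul_self_eq_one_iff.1 h2 with h3 | h3 <;> omega
    · exfalso
      rw [h] at hm1
      have h2 : (x a - x b) * ((x a - x b) - 1) = 1 := by linear_combination -hm1
      rcases Int.eq_one_or_neg_one_of_mul_eq_one h2 with h3 | h3 <;> rw [h3] at h2 <;> omega
  have hav : a ≠ v := by
    intro h
    have h1 := hchi01 b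
    have h2 : χ a = 1 := by rw [hχ, chi_v, if_pos h]
    have h3 : χ b = 1 := by omega
    have h4 : b = v := by
      by_contra hb
      rw [hχ, chi_v, if_neg hb] at h3; omega
    exact hab (h.trans h4.symm)
  have hbv : b ≠ v := by
    intro h
    have h1 := hchi01 a
    have h2 : χ b = 1 := by rw [hχ, chi_v, if_pos h]
    have h3 : χ a = 1 := by omega
    have h4 : a = v := by
      by_contra ha
      rw [hχ, chi_v, if_neg ha] at h3; omega
    exact hab (h4.trans h.symm)
  -- key facts for non-exceptional edges
  have key : ∀ p q, p ≠ v → q ≠ v → 0 < ε p q →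
      ¬(p = a ∧ q = b) → ¬(p = b ∧ q = a) → x p = x q := by
    intro p q hp hq hpq h1 h2
    have h3 := hzero p q h1 h2
    have hχp : χ p = 0 := by rw [hχ, chi_v, if_neg hp]
    have hχq : χ q = 0 := by rw [hχ, chi_v, if_neg hq]
    have hεne : (ε p q : ℤ) ≠ 0 := by
      simp only [ne_eq, Nat.cast_eq_zero]; omega
    simp only [ht, hχp, hχq] at h3
    have h4 : (x p - x q) * ((0 - 0) - (x p - x q)) = 0 := by
      rcases mul_eq_zero.1 h3 with h | h
      · exact absurd h hεne
      · exact h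
    have h5 : (x p - x q) * (x p - x q) = 0 := by linear_combination -h4
    have h6 := mul_self_eq_zero.1 h5
    omega
  have keyv : ∀ p, p ≠ v → 0 < ε p v → x p = x v ∨ x p = x v - 1 := by
    intro p hp hpv
    have h1 : ¬(p = a ∧ v = b) := fun h => hbv h.2.symm
    have h2 : ¬(p = b ∧ v = a) := fun h => hav h.2.symm
    have h3 := hzero p v h1 h2
    have hχp : χ p = 0 := by rw [hχ, chi_v, if_neg hp]
    have hχv : χ v = 1 := by rw [hχ, chi_v, if_pos rfl]
    have hεne : (ε p v : ℤ) ≠ 0 := by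
      simp only [ne_eq, Nat.cast_eq_zero]; omega
    simp only [ht, hχp, hχv] at h3
    have h4 : (x p - x v) * ((0 - 1) - (x p - x v)) = 0 := by
      rcases mul_eq_zero.1 h3 with h | h
      · exact absurd h hεne
      · exact h
    rcases mul_eq_zero.1 h4 with h | h <;> omega
  rcases hC0.2 with hD | hD
  · exact ⟨a, b, hav, hbv, hab, hεab, by omega, key, keyv⟩
  · refine ⟨b, a, hbv, hav, hab.symm, by rw [hsymm]; exact hεab, by omega, ?_, keyv⟩
    intro p q hp hq hpq h1 h2
    exact key p q hp hq hpq h2 h1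
end Extract

section Core
variable {V : Type*} [Fintype V] [DecidableEq V]

lemma mem_reachSet {ε : V → V → ℕ} {S : Set V} {a : V} (ha : a ∈ S) (z : V) :
    z ∈ reachSet ε S a ↔ ∃ hz : z ∈ S,
      (SimpleGraph.fromRel (fun p q : S => 0 < ε p.1 q.1)).Reachable ⟨a, ha⟩ ⟨z, hz⟩ := by
  constructor
  · rintro ⟨ha', hz, hr⟩; exact ⟨hz, hr⟩
  · rintro ⟨hz, hr⟩; exact ⟨ha, hz, hr⟩

lemma reachSet_sub {ε : V → V → ℕ} {S : Set V} {a : V} : reachSet ε S a ⊆ S := by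
  rintro z ⟨ha, hz, hr⟩; exact hz

lemma main_core (ε : V → V → ℕ) (hsymm : ∀ v w, ε v w = ε w v) (hloop : ∀ v, ε v v = 0)
    (v : V) (h2conn : gConnOn ε ({v}ᶜ : Set V))
    (hnocutC : ∀ a b : V, ε a b = 1 → (gGraph (εdel ε a b)).Connected)
    (x y : V → ℤ)
    (hsum : chiF {v} - (x + y) ∈ onesSub V)
    (a b : V) (hav : a ≠ v) (hbv : b ≠ v) (hab : a ≠ b) (hεab : ε a b = 1)
    (hxab : x a = x b + 1)
    (key : ∀ p q, p ≠ v → q ≠ v → 0 < ε p q → ¬(p = a ∧ q = b) → ¬(p = b ∧ q = a) → x p = x q)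
    (keyv : ∀ p, p ≠ v → 0 < ε p v → x p = x v ∨ x p = x v - 1) :
    (∃ a b : V, a ≠ v ∧ b ≠ v ∧ ε a b = 1 ∧
      ¬ gConnOn (εdel ε a b) ({v}ᶜ : Set V) ∧
      reachSet (εdel ε a b) {v}ᶜ a ∪ reachSet (εdel ε a b) {v}ᶜ b = ({v}ᶜ : Set V) ∧
      ((x - (chiS (reachSet (εdel ε a b) {v}ᶜ a) + chiF {v}) ∈ onesSub V ∧
        y - (chiS (reachSet (εdel ε a b) {v}ᶜ b) + chiF {v}) ∈ onesSub V) ∨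
       (x - (chiS (reachSet (εdel ε a b) {v}ᶜ b) + chiF {v}) ∈ onesSub V ∧
        y - (chiS (reachSet (εdel ε a b) {v}ᶜ a) + chiF {v}) ∈ onesSub V))) ∧
    (∃ u₁ u₂ : V, u₁ ≠ v ∧ u₂ ≠ v ∧
      gform ε x (chiF {u₁}) = 1 ∧ gform ε y (chiF {u₂}) = 1 ∧
      (∀ u : V, u ≠ v → gform ε x (chiF {u}) = 1 → u = u₁) ∧
      (∀ u : V, u ≠ v → gform ε y (chiF {u}) = 1 → u = u₂) ∧
      ∀ w : V, w ∉ ({v, u₁, u₂} : Set V) →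
        gform ε (chiF {w}) x ≤ 0 ∧ gform ε (chiF {w}) y ≤ 0) := by
  classical
  set S : Set V := ({v}ᶜ : Set V) with hS
  have hmemS : ∀ z : V, z ∈ S ↔ z ≠ v := by
    intro z; simp [hS]
  set ε' : V → V → ℕ := εdel ε a b with hε'
  set G' : SimpleGraph S := SimpleGraph.fromRel (fun p q : S => 0 < ε' p.1 q.1) with hG'
  have hd_ne : ∀ p q, ¬(p = a ∧ q = b) → ¬(p = b ∧ q = a) → ε' p q = ε p q := by
    intro p q h1 h2
    simp only [hε', εdel, if_neg (by tauto : ¬((p = a ∧ q = b) ∨ (p = b ∧ q = a)))]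
  have hd_pos : ∀ p q, 0 < ε' p q → 0 < ε p q ∧ ¬(p = a ∧ q = b) ∧ ¬(p = b ∧ q = a) := by
    intro p q h
    simp only [hε', εdel] at h
    by_cases hc : (p = a ∧ q = b) ∨ (p = b ∧ q = a)
    · rw [if_pos hc] at h; omega
    · rw [if_neg hc] at h; exact ⟨h, by tauto, by tauto⟩
  have hd_symm : ∀ p q, ε' p q = ε' q p := by
    intro p q
    simp only [hε', εdel]
    by_cases hc : (p = a ∧ q = b) ∨ (p = b ∧ q = a)
    · rw [if_pos hc, if_pos (by tauto)]
    · rw [if_neg hc, if_neg (by tauto), hsymm]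
  have ha_mem : a ∈ S := (hmemS a).2 hav
  have hb_mem : b ∈ S := (hmemS b).2 hbv
  set Ra : Set V := reachSet ε' S a with hRa
  set Rb : Set V := reachSet ε' S b with hRb
  -- adjacency in G' preserves x
  have hx_adj : ∀ p q : S, G'.Adj p q → x p.1 = x q.1 := by
    intro p q hadj
    rw [hG', SimpleGraph.fromRel_adj] at hadj
    obtain ⟨hne, hor⟩ := hadj
    have hpos : 0 < ε' p.1 q.1 := by
      rcases hor with h | h
      · exact h
      · rw [hd_symm]; exact h
    obtain ⟨hpq, h1, h2⟩ := hd_pos _ _ hpos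
    have hp : p.1 ≠ v := (hmemS p.1).1 p.2
    have hq : q.1 ≠ v := (hmemS q.1).1 q.2
    exact key p.1 q.1 hp hq hpq h1 h2
  have hx_reach : ∀ p q : S, G'.Reachable p q → x p.1 = x q.1 := by
    intro p q hr
    exact reach_closed (P := fun r : S => x p.1 = x r.1)
      (fun r s hpr hadj => hpr.trans (hx_adj r s hadj)) hr rfl
  have hxRa : ∀ z ∈ Ra, x z = x a := by
    intro z hz
    obtain ⟨hz', hr⟩ := (mem_reachSet ha_mem z).1 hz
    exact (hx_reach _ _ hr).symm
  have hxRb : ∀ z ∈ Rb, x z = x b := by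
    intro z hz
    obtain ⟨hz', hr⟩ := (mem_reachSet hb_mem z).1 hz
    exact (hx_reach _ _ hr).symm
  have haRa : a ∈ Ra := (mem_reachSet ha_mem a).2 ⟨ha_mem, SimpleGraph.Reachable.refl _⟩
  have hbRb : b ∈ Rb := (mem_reachSet hb_mem b).2 ⟨hb_mem, SimpleGraph.Reachable.refl _⟩
  have hnotreach : ¬ G'.Reachable ⟨a, ha_mem⟩ ⟨b, hb_mem⟩ := by
    intro hr
    have := hx_reach _ _ hr
    simp only at this
    omega
  have hdisj : ∀ z, z ∈ Ra → z ∈ Rb → False := by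
    intro z hza hzb
    obtain ⟨hz1, hr1⟩ := (mem_reachSet ha_mem z).1 hza
    obtain ⟨hz2, hr2⟩ := (mem_reachSet hb_mem z).1 hzb
    exact hnotreach (hr1.trans hr2.symm)
  have hnotconn : ¬ gConnOn ε' S := by
    intro hc
    exact hnotreach (hc.preconnected ⟨a, ha_mem⟩ ⟨b, hb_mem⟩)
  -- covering
  have hcover : ∀ z, z ∈ S → z ∈ Ra ∨ z ∈ Rb := by
    have hHconn : (SimpleGraph.fromRel (fun p q : S => 0 < ε p.1 q.1)).Connected := h2conn
    intro z hz
    have hr := hHconn.preconnected ⟨a, ha_mem⟩ ⟨z, hz⟩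
    have step : ∀ p q : S, (p.1 ∈ Ra ∨ p.1 ∈ Rb) →
        (SimpleGraph.fromRel (fun p q : S => 0 < ε p.1 q.1)).Adj p q →
        (q.1 ∈ Ra ∨ q.1 ∈ Rb) := by
      intro p q hp hadj
      rw [SimpleGraph.fromRel_adj] at hadj
      obtain ⟨hne, hor⟩ := hadj
      have hpq : 0 < ε p.1 q.1 := by
        rcases hor with h | h
        · exact h
        · rw [hsymm]; exact h
      by_cases hc : (p.1 = a ∧ q.1 = b) ∨ (p.1 = b ∧ q.1 = a)
      · rcases hc with ⟨h1, h2⟩ | ⟨h1, h2⟩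
        · right; rw [h2]; exact hbRb
        · left; rw [h2]; exact haRa
      · have hpos : 0 < ε' p.1 q.1 := by
          rw [hd_ne p.1 q.1 (by tauto) (by tauto)]; exact hpq
        have hadj' : G'.Adj p q := by
          rw [hG', SimpleGraph.fromRel_adj]
          exact ⟨hne, Or.inl hpos⟩
        rcases hp with hp | hp
        · left
          obtain ⟨hz1, hr1⟩ := (mem_reachSet ha_mem p.1).1 hp
          exact (mem_reachSet ha_mem q.1).2 ⟨q.2, hr1.trans hadj'.reachable⟩
        · right
          obtain ⟨hz1, hr1⟩ := (mem_reachSet hb_mem p.1).1 hp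
          exact (mem_reachSet hb_mem q.1).2 ⟨q.2, hr1.trans hadj'.reachable⟩
    exact reach_closed (P := fun r : S => r.1 ∈ Ra ∨ r.1 ∈ Rb) step hr (Or.inl haRa)
  have hunion : Ra ∪ Rb = S := by
    apply Set.eq_of_subset_of_subset
    · intro z hz
      rcases hz with hz | hz
      · exact reachSet_sub hz
      · exact reachSet_sub hz
    · intro z hz
      exact hcover z hz
  -- each component contains a neighbor of v
  have hnbr : ∀ c : V, c ∈ S → ∃ p, p ∈ reachSet ε' S c ∧ 0 < ε p v := by
    intro c hcS
    by_contra h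
    push_neg at h
    have hzero : ∀ p, p ∈ reachSet ε' S c → ε p v = 0 := by
      intro p hp; have := h p hp; omega
    have hGconn : (gGraph ε').Connected := hnocutC a b hεab
    have hr : (gGraph ε').Reachable c v := hGconn.preconnected c v
    have step : ∀ p q : V, p ∈ reachSet ε' S c → (gGraph ε').Adj p q →
        q ∈ reachSet ε' S c := by
      intro p q hp hadj
      rw [gGraph, SimpleGraph.fromRel_adj] at hadj
      obtain ⟨hne, hor⟩ := hadj
      have hpos : 0 < ε' p q := by
        rcases hor with h' | h'
        · exact h'
        · rw [hd_symm]; exact h'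
      have hpS : p ∈ S := reachSet_sub hp
      have hqv : q ≠ v := by
        intro hq
        rw [hq] at hpos
        have h1 : ¬(p = a ∧ v = b) := fun hh => hbv hh.2.symm
        have h2 : ¬(p = b ∧ v = a) := fun hh => hav hh.2.symm
        rw [hd_ne p v h1 h2] at hpos
        rw [hzero p hp] at hpos
        omega
      have hqS : q ∈ S := (hmemS q).2 hqv
      have hadj' : G'.Adj ⟨p, hpS⟩ ⟨q, hqS⟩ := by
        rw [hG', SimpleGraph.fromRel_adj]
        exact ⟨fun hh => hne (congrArg Subtype.val hh), Or.inl hpos⟩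
      obtain ⟨hz1, hr1⟩ := (mem_reachSet hcS p).1 hp
      exact (mem_reachSet hcS q).2 ⟨hqS, hr1.trans hadj'.reachable⟩
    have hvmem : v ∈ reachSet ε' S c :=
      reach_closed step hr ((mem_reachSet hcS c).2 ⟨hcS, SimpleGraph.Reachable.refl _⟩)
    have := reachSet_sub hvmem
    rw [hmemS] at this
    exact this rfl
  have hxv : x a = x v ∧ x b = x v - 1 := by
    obtain ⟨p, hpRa, hpv⟩ := hnbr a ha_mem
    obtain ⟨q, hqRb, hqv⟩ := hnbr b hb_mem
    have h1 : x p = x a := hxRa p hpRa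
    have h2 : x q = x b := hxRb q hqRb
    have h3 := keyv p ((hmemS p).1 (reachSet_sub hpRa)) hpv
    have h4 := keyv q ((hmemS q).1 (reachSet_sub hqRb)) hqv
    omega
  -- membership of x and y in the right classes
  have hvnotRa : v ∉ Ra := fun h => by rw [hmemS] at *; exact (reachSet_sub h) rfl
  have hvnotRb : v ∉ Rb := fun h => by rw [hmemS] at *; exact (reachSet_sub h) rfl
  have hxmem : x - (chiS Ra + chiF {v}) ∈ onesSub V := by
    rw [onesSub_mem_iff]
    refine ⟨x v - 1, fun w => ?_⟩
    simp only [Pi.sub_apply, Pi.add_apply, chi_v]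
    by_cases hwv : w = v
    · subst hwv
      rw [chiS, Set.indicator_of_notMem hvnotRa, if_pos rfl]
      omega
    · rw [if_neg hwv]
      by_cases hwRa : w ∈ Ra
      · rw [chiS, Set.indicator_of_mem hwRa]
        have := hxRa w hwRa
        simp only [Pi.one_apply]
        omega
      · have hwRb : w ∈ Rb := by
          rcases hcover w ((hmemS w).2 hwv) with h | h
          · exact absurd h hwRa
          · exact h
        rw [chiS, Set.indicator_of_notMem hwRa]
        have := hxRb w hwRb
        omega
  have hy0 : y - (chiF {v} - x) ∈ onesSub V := by
    have heq : y - (chiF {v} - x) = -(chiF {v} - (x + y)) := by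
      funext w; simp; ring
    rw [heq]
    exact neg_mem hsum
  have hymem : y - (chiS Rb + chiF {v}) ∈ onesSub V := by
    have h1 : (chiF {v} - x) - (chiS Rb + chiF {v}) ∈ onesSub V := by
      rw [onesSub_mem_iff]
      refine ⟨-(x v), fun w => ?_⟩
      simp only [Pi.sub_apply, Pi.add_apply, chi_v]
      by_cases hwv : w = v
      · subst hwv
        rw [chiS, Set.indicator_of_notMem hvnotRb]
        omega
      · rw [if_neg hwv]
        by_cases hwRb : w ∈ Rb
        · rw [chiS, Set.indicator_of_mem hwRb]
          have := hxRb w hwRb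
          simp only [Pi.one_apply]
          omega
        · have hwRa : w ∈ Ra := by
            rcases hcover w ((hmemS w).2 hwv) with h | h
            · exact h
            · exact absurd h hwRb
          rw [chiS, Set.indicator_of_notMem hwRb]
          have := hxRa w hwRa
          omega
    have heq : y - (chiS Rb + chiF {v})
        = ((chiF {v} - x) - (chiS Rb + chiF {v})) + (y - (chiF {v} - x)) := by
      ring
    rw [heq]
    exact add_mem h1 hy0
  -- part 2 computations
  have hgy : ∀ u : V, gform ε y (chiF {u}) = gform ε (fun w => chiF {v} w - x w) (chiF {u}) := by
    intro u
    rw [gform_comm ε hsymm hloop y, gform_comm ε hsymm hloop _ (chiF {u})]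
    apply gform_right_inv ε hloop
    have heq : y - (fun w => chiF {v} w - x w) = y - (chiF {v} - x) := by
      funext w; simp
    rw [heq]
    exact hy0
  have hφa : gform ε x (chiF {a}) = 1 := by
    rw [gform_chi ε hsymm hloop]
    rw [Finset.sum_eq_single_of_mem b (Finset.mem_univ b)]
    · rw [hεab]; push_cast; omega
    · intro q _ hq
      by_cases hpos : 0 < ε a q
      · by_cases hqv : q = v
        · have hxq : x q = x v := by rw [hqv]
          rw [show x a - x q = 0 by omega, mul_zero]
        · have := key a q hav hqv hpos (fun h => hq h.2) (fun h => hab h.1)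
          rw [show x a - x q = 0 by omega, mul_zero]
      · rw [show ε a q = 0 by omega]; push_cast; ring
  have hφnonpos : ∀ u : V, u ≠ v → u ≠ a → gform ε x (chiF {u}) ≤ 0 := by
    intro u huv hua
    rw [gform_chi ε hsymm hloop]
    apply Finset.sum_nonpos
    intro q _
    by_cases hpos : 0 < ε u q
    · by_cases hqv : q = v
      · have hxq : x q = x v := by rw [hqv]
        have hεuv : 0 < ε u v := by rw [← hqv]; exact hpos
        have := keyv u huv hεuv
        have h1 : x u - x q ≤ 0 := by omega
        exact mul_nonpos_of_nonneg_of_nonpos (Int.natCast_nonneg _) h1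
      · by_cases hc : u = b ∧ q = a
        · obtain ⟨h1, h2⟩ := hc
          rw [h1, h2]
          have h3 : x b - x a = -1 := by omega
          rw [h3]
          simp [hsymm b a, hεab]
        · have := key u q huv hqv hpos (fun h => hua h.1) hc
          rw [show x u - x q = 0 by omega, mul_zero]
    · rw [show ε u q = 0 by omega]; push_cast; ring_nf; rfl
  have hψb : gform ε y (chiF {b}) = 1 := by
    rw [hgy, gform_chi ε hsymm hloop]
    rw [Finset.sum_eq_single_of_mem a (Finset.mem_univ a)]
    · simp only [chi_v, if_neg hbv, if_neg hav, hsymm b a, hεab]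
      push_cast; omega
    · intro q _ hq
      by_cases hpos : 0 < ε b q
      · by_cases hqv : q = v
        · have hxq : x q = x v := by rw [hqv]
          simp only [chi_v, if_neg hbv, if_pos hqv]
          rw [show (0:ℤ) - x b - (1 - x q) = 0 by omega, mul_zero]
        · have := key b q hbv hqv hpos (fun h => hab h.1.symm) (fun h => hq h.2)
          simp only [chi_v, if_neg hbv, if_neg hqv]
          rw [show (0:ℤ) - x b - (0 - x q) = 0 by omega, mul_zero]
      · rw [show ε b q = 0 by omega]; push_cast; ring
  have hψnonpos : ∀ u : V, u ≠ v → u ≠ b → gform ε y (chiF {u}) ≤ 0 := by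
    intro u huv hub
    rw [hgy, gform_chi ε hsymm hloop]
    apply Finset.sum_nonpos
    intro q _
    by_cases hpos : 0 < ε u q
    · by_cases hqv : q = v
      · have hxq : x q = x v := by rw [hqv]
        have hεuv : 0 < ε u v := by rw [← hqv]; exact hpos
        have := keyv u huv hεuv
        simp only [chi_v, if_neg huv, if_pos hqv]
        have h1 : (0:ℤ) - x u - (1 - x q) ≤ 0 := by omega
        exact mul_nonpos_of_nonneg_of_nonpos (Int.natCast_nonneg _) h1
      · by_cases hc : u = a ∧ q = b
        · obtain ⟨h1, h2⟩ := hc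
          rw [h1, h2]
          simp only [chi_v, if_neg hav, if_neg hbv, hεab]
          rw [show (0:ℤ) - x a - (0 - x b) = -1 by omega]
          norm_num
        · have := key u q huv hqv hpos hc (fun h => hub h.1)
          simp only [chi_v, if_neg huv, if_neg hqv]
          rw [show (0:ℤ) - x u - (0 - x q) = 0 by omega, mul_zero]
    · rw [show ε u q = 0 by omega]; push_cast; ring_nf; rfl
  refine ⟨⟨a, b, hav, hbv, hεab, hnotconn, hunion, Or.inl ⟨hxmem, hymem⟩⟩,
    ⟨a, b, hav, hbv, hφa, hψb, ?_, ?_, ?_⟩⟩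
  · intro u huv hu1
    by_contra hua
    have := hφnonpos u huv hua
    omega
  · intro u huv hu1
    by_contra hub
    have := hψnonpos u huv hub
    omega
  · intro w hw
    simp only [Set.mem_insert_iff, Set.mem_singleton_iff, not_or] at hw
    obtain ⟨hwv, hwa, hwb⟩ := hw
    constructor
    · rw [gform_comm ε hsymm hloop]
      exact hφnonpos w hwv hwa
    · rw [gform_comm ε hsymm hloop]
      exact hψnonpos w hwv hwb
end Core


/-- Lemma 3.4 of the paper. -/
theorem stmt_6 {V : Type*} [Fintype V] [DecidableEq V] (ε : V → V → ℕ)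
    (hcard : 2 ≤ Fintype.card V)
    (hsymm : ∀ v w, ε v w = ε w v) (hloop : ∀ v, ε v v = 0)
    (hconn : (gGraph ε).Connected)
    (h2conn : ∀ u : V, gConnOn ε ({u}ᶜ : Set V))
    (hnocut : ¬ ∃ a b : V, ε a b = 1 ∧ ¬ (gGraph (εdel ε a b)).Connected)
    (v : V) (x y : V → ℤ)
    (hsum : chiF {v} - (x + y) ∈ onesSub V)
    (hprod : gform ε x y = -1) :
    (∃ a b : V, a ≠ v ∧ b ≠ v ∧ ε a b = 1 ∧
      ¬ gConnOn (εdel ε a b) ({v}ᶜ : Set V) ∧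
      reachSet (εdel ε a b) {v}ᶜ a ∪ reachSet (εdel ε a b) {v}ᶜ b = ({v}ᶜ : Set V) ∧
      ((x - (chiS (reachSet (εdel ε a b) {v}ᶜ a) + chiF {v}) ∈ onesSub V ∧
        y - (chiS (reachSet (εdel ε a b) {v}ᶜ b) + chiF {v}) ∈ onesSub V) ∨
       (x - (chiS (reachSet (εdel ε a b) {v}ᶜ b) + chiF {v}) ∈ onesSub V ∧
        y - (chiS (reachSet (εdel ε a b) {v}ᶜ a) + chiF {v}) ∈ onesSub V))) ∧
    (∃ u₁ u₂ : V, u₁ ≠ v ∧ u₂ ≠ v ∧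
      gform ε x (chiF {u₁}) = 1 ∧ gform ε y (chiF {u₂}) = 1 ∧
      (∀ u : V, u ≠ v → gform ε x (chiF {u}) = 1 → u = u₁) ∧
      (∀ u : V, u ≠ v → gform ε y (chiF {u}) = 1 → u = u₂) ∧
      ∀ w : V, w ∉ ({v, u₁, u₂} : Set V) →
        gform ε (chiF {w}) x ≤ 0 ∧ gform ε (chiF {w}) y ≤ 0) := by
  have hnocutC : ∀ a b : V, ε a b = 1 → (gGraph (εdel ε a b)).Connected := by
    intro a b h
    by_contra hc
    exact hnocut ⟨a, b, h, hc⟩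
  obtain ⟨a, b, hav, hbv, hab, hεab, hxab, key, keyv⟩ :=
    extract ε hsymm hloop v x y hsum hprod
  exact main_core ε hsymm hloop v (h2conn v) hnocutC x y hsum a b hav hbv hab hεab hxab key keyv
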